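/- For λ > 0, t > 0 and s ∈ [0,t), and any real x, the integral ∫_s^t p(r−s, x, λ(r−s)) dr equals (1/λ)·[exp(−λ(|x|−x))·Φ(λ√(t−s) − |x|/√(t−s)) − exp(λ(|x|+x))·Φ(−λ√(t−s) − |x|/√(t−s))], where Φ is the standard normal CDF and p(u, x, m) = (2πu)^{-1/2}·exp(−(x−m)²/(2u)). -/

import Mathlib

open MeasureTheory Real intervalIntegral

/-- Gaussian density with variance `t` and mean `m`, evaluated at `x`. -/
noncomputable def gaussDensity (t x m : ℝ) : ℝ :=
  Real.exp (-(x - m) ^ 2 / (2 * t)) / Real.sqrt (2 * Real.pi * t)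

/-- Standard normal cumulative distribution function. -/
noncomputable def Phi (x : ℝ) : ℝ :=
  ∫ u in Set.Iic x, Real.exp (-u ^ 2 / 2) / Real.sqrt (2 * Real.pi)

open Filter Set Topology

noncomputable def phi (u : ℝ) : ℝ := Real.exp (-u ^ 2 / 2) / Real.sqrt (2 * Real.pi)

lemma phi_cont : Continuous phi := by
  unfold phi; continuity

lemma phi_integrable : Integrable phi := by
  unfold phi
  have h : Integrable (fun u : ℝ => Real.exp (-(1/2) * u ^ 2)) :=
    integrable_exp_neg_mul_sq (by norm_num)
  have : (fun u : ℝ => Real.exp (-u ^ 2 / 2) / Real.sqrt (2 * Real.pi))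
      = fun u => Real.exp (-(1/2) * u ^ 2) * (Real.sqrt (2 * Real.pi))⁻¹ := by
    funext u; rw [div_eq_mul_inv]; ring_nf
  rw [this]
  exact h.mul_const _

lemma hasDerivAt_Phi (x : ℝ) : HasDerivAt Phi (phi x) x := by
  have key : Phi = fun y => (∫ u in Set.Iic (0:ℝ), phi u) + ∫ u in (0:ℝ)..y, phi u := by
    funext y
    have := integral_Iic_sub_Iic (phi_integrable.integrableOn (s := Set.Iic 0))
      (phi_integrable.integrableOn (s := Set.Iic y))
    unfold Phi phi at *
    linarith [this]
  rw [key]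
  have : HasDerivAt (fun y => ∫ u in (0:ℝ)..y, phi u) (phi x) x :=
    intervalIntegral.integral_hasDerivAt_right
      (phi_integrable.intervalIntegrable)
      phi_cont.aestronglyMeasurable.stronglyMeasurableAtFilter
      phi_cont.continuousAt
  simpa using (this.const_add (∫ u in Set.Iic (0:ℝ), phi u))

lemma Phi_tendsto_atBot : Tendsto Phi atBot (𝓝 0) := by
  have h : ∀ y : ℝ, Phi y = ∫ u, Set.indicator (Set.Iic y) phi u := by
    intro y
    unfold Phi phi
    rw [← MeasureTheory.integral_indicator measurableSet_Iic]
  refine Tendsto.congr (fun y => (h y).symm) ?_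
  have := MeasureTheory.tendsto_integral_filter_of_dominated_convergence
    (μ := volume) (l := atBot) (F := fun (y : ℝ) u => Set.indicator (Set.Iic y) phi u)
    (f := fun _ => (0:ℝ)) (bound := fun u => |phi u|)
    (Eventually.of_forall fun y =>
      (phi_cont.aestronglyMeasurable.indicator measurableSet_Iic))
    (Eventually.of_forall fun y => ae_of_all _ fun u => by
      simpa using norm_indicator_le_norm_self phi u (s := Set.Iic y))
    phi_integrable.abs
    (ae_of_all _ fun u => ?_)
  · simpa using this
  · have : ∀ᶠ y in (atBot : Filter ℝ), y < u := eventually_lt_atBot u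
    refine Tendsto.congr' ?_ tendsto_const_nhds
    filter_upwards [this] with y hy
    rw [Set.indicator_of_notMem (by simpa using hy.not_ge : u ∉ Set.Iic y)]

lemma key_algebra (lam x q : ℝ) (hlam : 0 < lam) (hq : 0 < q) :
    (1/lam) * (Real.exp (-lam*(|x|-x)) * (phi (lam*q - |x|/q) * (lam/(2*q) + |x|/(2*q^3)))
      - Real.exp (lam*(|x|+x)) * (phi (-(lam*q) - |x|/q) * (-(lam/(2*q)) + |x|/(2*q^3))))
    = gaussDensity (q^2) x (lam*q^2) := by
  have hq2 : (0:ℝ) < q^2 := by positivity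
  have hpi : (0:ℝ) < Real.sqrt (2*Real.pi) := Real.sqrt_pos.mpr (by positivity)
  have habs : |x|^2 = x^2 := sq_abs x
  have e1 : -(lam*q - |x|/q)^2/2 = -(x - lam*q^2)^2/(2*q^2) + (lam*|x| - lam*x) := by
    field_simp
    ring_nf
    nlinarith [habs]
  have e2 : -(-(lam*q) - |x|/q)^2/2 = -(x - lam*q^2)^2/(2*q^2) - (lam*|x| + lam*x) := by
    field_simp
    ring_nf
    nlinarith [habs]
  have hsq : Real.sqrt (2*Real.pi*q^2) = Real.sqrt (2*Real.pi) * q := by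
    rw [Real.sqrt_mul (by positivity), Real.sqrt_sq hq.le]
  have h1 : Real.exp (-lam*(|x|-x)) * Real.exp (-(lam*q - |x|/q)^2/2)
      = Real.exp (-(x - lam*q^2)^2/(2*q^2)) := by
    rw [← Real.exp_add]; congr 1; linear_combination e1
  have h2 : Real.exp (lam*(|x|+x)) * Real.exp (-(-(lam*q) - |x|/q)^2/2)
      = Real.exp (-(x - lam*q^2)^2/(2*q^2)) := by
    rw [← Real.exp_add]; congr 1; linear_combination e2
  unfold phi gaussDensity
  rw [hsq]
  calc (1/lam) * (Real.exp (-lam*(|x|-x)) * (Real.exp (-(lam*q - |x|/q)^2/2)/Real.sqrt (2*Real.pi) * (lam/(2*q) + |x|/(2*q^3)))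
      - Real.exp (lam*(|x|+x)) * (Real.exp (-(-(lam*q) - |x|/q)^2/2)/Real.sqrt (2*Real.pi) * (-(lam/(2*q)) + |x|/(2*q^3))))
      = (1/lam) * ((Real.exp (-lam*(|x|-x)) * Real.exp (-(lam*q - |x|/q)^2/2)) / Real.sqrt (2*Real.pi) * (lam/(2*q) + |x|/(2*q^3))
        - (Real.exp (lam*(|x|+x)) * Real.exp (-(-(lam*q) - |x|/q)^2/2)) / Real.sqrt (2*Real.pi) * (-(lam/(2*q)) + |x|/(2*q^3))) := by
        ring
    _ = Real.exp (-(x - lam*q^2)^2/(2*q^2)) / (Real.sqrt (2*Real.pi) * q) := by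
        rw [h1, h2]; field_simp; ring

lemma hasDerivAt_F (lam x : ℝ) (hlam : 0 < lam) {u : ℝ} (hu : 0 < u) :
    HasDerivAt (fun v => (1/lam) * (Real.exp (-lam*(|x|-x)) * Phi (lam * Real.sqrt v - |x| / Real.sqrt v)
      - Real.exp (lam*(|x|+x)) * Phi (-(lam * Real.sqrt v) - |x| / Real.sqrt v)))
      (gaussDensity u x (lam*u)) u := by
  set q := Real.sqrt u with hqdef
  have hqpos : 0 < q := Real.sqrt_pos.mpr hu
  have hq0 : q ≠ 0 := hqpos.ne'
  have hq2 : q^2 = u := Real.sq_sqrt hu.le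
  have hs : HasDerivAt Real.sqrt (1 / (2 * q)) u := by
    simpa [hqdef] using Real.hasDerivAt_sqrt hu.ne'
  have hdiv : HasDerivAt (fun v => |x| / Real.sqrt v)
      ((0 * q - |x| * (1/(2*q)))/q^2) u := (hasDerivAt_const u |x|).div hs hq0
  have ha1 : HasDerivAt (fun v => lam * Real.sqrt v - |x| / Real.sqrt v)
      (lam * (1/(2*q)) - (0 * q - |x| * (1/(2*q)))/q^2) u := (hs.const_mul lam).sub hdiv
  have ha2 : HasDerivAt (fun v => -(lam * Real.sqrt v) - |x| / Real.sqrt v)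
      (-(lam * (1/(2*q))) - (0 * q - |x| * (1/(2*q)))/q^2) u := ((hs.const_mul lam).neg).sub hdiv
  have hp1 := (hasDerivAt_Phi (lam * q - |x| / q)).comp u ha1
  have hp2 := (hasDerivAt_Phi (-(lam * q) - |x| / q)).comp u ha2
  have h := ((hp1.const_mul (Real.exp (-lam*(|x|-x)))).sub
    (hp2.const_mul (Real.exp (lam*(|x|+x))))).const_mul (1/lam)
  have hval : (1/lam) * (Real.exp (-lam*(|x|-x)) * (phi (lam*q - |x|/q) * (lam * (1/(2*q)) - (0 * q - |x| * (1/(2*q)))/q^2))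
      - Real.exp (lam*(|x|+x)) * (phi (-(lam*q) - |x|/q) * (-(lam * (1/(2*q))) - (0 * q - |x| * (1/(2*q)))/q^2)))
      = gaussDensity u x (lam*u) := by
    rw [← hq2]
    rw [← key_algebra lam x q hlam hqpos]
    congr 1
    congr 1
    · congr 1; congr 1; field_simp; ring
    · congr 1; congr 1; field_simp; ring
  rw [← hval]
  convert h using 2
  · rfl
  · rfl
  · simp [Function.comp] <;> ring

lemma gauss_integrable (lam x s t : ℝ) (hst : s < t) :
    IntervalIntegrable (fun r => gaussDensity (r - s) x (lam * (r - s))) volume s t := by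
  have hg : IntervalIntegrable (fun r : ℝ => (Real.sqrt (2*Real.pi))⁻¹ * (r - s) ^ (-(1/2) : ℝ)) volume s t := by
    have := (intervalIntegrable_rpow' (a := s - s) (b := t - s) (r := (-(1/2):ℝ)) (by norm_num)).comp_sub_right s
    simpa using this.const_mul (Real.sqrt (2*Real.pi))⁻¹
  refine hg.mono_fun ?_ ?_
  · apply Measurable.aestronglyMeasurable
    unfold gaussDensity
    fun_prop
  · rw [Filter.EventuallyLE, ae_restrict_iff' measurableSet_uIoc]
    refine ae_of_all _ fun r hr => ?_
    rw [Set.uIoc_of_le hst.le] at hr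
    have hrs : 0 < r - s := sub_pos.mpr hr.1
    unfold gaussDensity
    have h1 : Real.sqrt (2 * Real.pi * (r - s)) = Real.sqrt (2*Real.pi) * Real.sqrt (r - s) :=
      Real.sqrt_mul (by positivity) _
    have h2 : (r - s) ^ (-(1/2) : ℝ) = (Real.sqrt (r - s))⁻¹ := by
      rw [Real.rpow_neg hrs.le, ← Real.sqrt_eq_rpow]
    simp only [Real.norm_eq_abs]
    rw [abs_of_nonneg (by positivity), abs_of_nonneg (by positivity), h1, h2]
    rw [div_eq_mul_inv, mul_inv]
    have hexp : Real.exp (-(x - lam * (r - s)) ^ 2 / (2 * (r - s))) ≤ 1 :=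
      Real.exp_le_one_iff.mpr (div_nonpos_of_nonpos_of_nonneg (neg_nonpos.mpr (by positivity)) (by positivity))
    calc Real.exp (-(x - lam * (r - s)) ^ 2 / (2 * (r - s))) * ((Real.sqrt (2*Real.pi))⁻¹ * (Real.sqrt (r-s))⁻¹)
        ≤ 1 * ((Real.sqrt (2*Real.pi))⁻¹ * (Real.sqrt (r-s))⁻¹) := by
          gcongr
      _ = (Real.sqrt (2*Real.pi))⁻¹ * (Real.sqrt (r-s))⁻¹ := one_mul _

lemma F_tendsto_zero (lam x : ℝ) (hlam : 0 < lam) :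
    Tendsto (fun u => (1/lam) * (Real.exp (-lam*(|x|-x)) * Phi (lam * Real.sqrt u - |x| / Real.sqrt u)
      - Real.exp (lam*(|x|+x)) * Phi (-(lam * Real.sqrt u) - |x| / Real.sqrt u))) (𝓝[>] (0:ℝ)) (𝓝 0) := by
  have hPhiCont : Continuous Phi :=
    continuous_iff_continuousAt.mpr fun y => (hasDerivAt_Phi y).continuousAt
  have hsqpos : Tendsto Real.sqrt (𝓝[>] (0:ℝ)) (𝓝[>] (0:ℝ)) := by
    apply tendsto_nhdsWithin_of_tendsto_nhds_of_eventually_within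
    · simpa using (Real.continuous_sqrt.tendsto 0).mono_left nhdsWithin_le_nhds
    · filter_upwards [self_mem_nhdsWithin] with u hu
      exact Real.sqrt_pos.mpr hu
  by_cases hx : x = 0
  · subst hx
    have hsq0 : Tendsto (fun u : ℝ => Real.sqrt u) (𝓝[>] (0:ℝ)) (𝓝 0) := by
      simpa using (Real.continuous_sqrt.tendsto 0).mono_left nhdsWithin_le_nhds
    have : Tendsto (fun q : ℝ => (1/lam) * (Real.exp (-lam*((0:ℝ)-0)) * Phi (lam * q - 0)
        - Real.exp (lam*((0:ℝ)+0)) * Phi (-(lam * q) - 0))) (𝓝 (0:ℝ))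
        (𝓝 ((1/lam) * (Real.exp (-lam*((0:ℝ)-0)) * Phi (lam * 0 - 0)
        - Real.exp (lam*((0:ℝ)+0)) * Phi (-(lam * 0) - 0)))) := by
      apply Continuous.tendsto
      continuity
    have h2 := this.comp hsq0
    simp only [abs_zero, zero_div]
    convert h2 using 2 with u
    · simp
    · simp
  · have hxa : 0 < |x| := abs_pos.mpr hx
    have hinv : Tendsto (fun q : ℝ => |x| / q) (𝓝[>] (0:ℝ)) atTop := by
      have := tendsto_inv_nhdsGT_zero.const_mul_atTop hxa
      simpa [div_eq_mul_inv] using this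
    have hdiv : Tendsto (fun u : ℝ => |x| / Real.sqrt u) (𝓝[>] (0:ℝ)) atTop :=
      hinv.comp hsqpos
    have hsq0 : Tendsto (fun u : ℝ => lam * Real.sqrt u) (𝓝[>] (0:ℝ)) (𝓝 0) := by
      have : Tendsto (fun u : ℝ => Real.sqrt u) (𝓝[>] (0:ℝ)) (𝓝 0) := by
        simpa using (Real.continuous_sqrt.tendsto 0).mono_left nhdsWithin_le_nhds
      simpa using this.const_mul lam
    have harg1 : Tendsto (fun u : ℝ => lam * Real.sqrt u - |x| / Real.sqrt u)
        (𝓝[>] (0:ℝ)) atBot := by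
      have h := hsq0.add_atBot (tendsto_neg_atTop_atBot.comp hdiv)
      simpa [sub_eq_add_neg] using h
    have harg2 : Tendsto (fun u : ℝ => -(lam * Real.sqrt u) - |x| / Real.sqrt u)
        (𝓝[>] (0:ℝ)) atBot := by
      have h := (hsq0.neg).add_atBot (tendsto_neg_atTop_atBot.comp hdiv)
      simpa [sub_eq_add_neg] using h
    have hp1 : Tendsto (fun u : ℝ => Phi (lam * Real.sqrt u - |x| / Real.sqrt u))
        (𝓝[>] (0:ℝ)) (𝓝 0) := Phi_tendsto_atBot.comp harg1
    have hp2 : Tendsto (fun u : ℝ => Phi (-(lam * Real.sqrt u) - |x| / Real.sqrt u))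
        (𝓝[>] (0:ℝ)) (𝓝 0) := Phi_tendsto_atBot.comp harg2
    have := ((hp1.const_mul (Real.exp (-lam*(|x|-x)))).sub
      (hp2.const_mul (Real.exp (lam*(|x|+x))))).const_mul (1/lam)
    simpa using this

theorem stmt_6 (lam t s x : ℝ) (hlam : 0 < lam) (ht : 0 < t) (hs : 0 ≤ s) (hst : s < t) :
    ∫ r in s..t, gaussDensity (r - s) x (lam * (r - s)) =
      (1 / lam) *
        (Real.exp (-lam * (|x| - x)) *
            Phi (lam * Real.sqrt (t - s) - |x| / Real.sqrt (t - s))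
          - Real.exp (lam * (|x| + x)) *
            Phi (-(lam * Real.sqrt (t - s)) - |x| / Real.sqrt (t - s))) := by
  set F : ℝ → ℝ := fun u => (1/lam) * (Real.exp (-lam*(|x|-x)) * Phi (lam * Real.sqrt u - |x| / Real.sqrt u)
      - Real.exp (lam*(|x|+x)) * Phi (-(lam * Real.sqrt u) - |x| / Real.sqrt u)) with hF
  have hderiv : ∀ r ∈ Set.Ioo s t, HasDerivAt (fun r => F (r - s))
      (gaussDensity (r - s) x (lam * (r - s))) r := by
    intro r hr
    have h := (hasDerivAt_F lam x hlam (sub_pos.mpr hr.1)).comp r ((hasDerivAt_id r).sub_const s)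
    simpa [hF, Function.comp_def] using h
  have hint := gauss_integrable lam x s t hst
  have hsub : Tendsto (fun r : ℝ => r - s) (𝓝[>] s) (𝓝[>] (0:ℝ)) := by
    apply tendsto_nhdsWithin_of_tendsto_nhds_of_eventually_within
    · have h0 : Tendsto (fun r : ℝ => r - s) (𝓝 s) (𝓝 (s - s)) :=
        (continuous_id.sub continuous_const).tendsto s
      rw [sub_self] at h0
      exact h0.mono_left nhdsWithin_le_nhds
    · filter_upwards [self_mem_nhdsWithin] with r hr
      exact sub_pos.mpr (mem_Ioi.mp hr)
  have ha : Tendsto (fun r => F (r - s)) (𝓝[>] s) (𝓝 0) :=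
    (F_tendsto_zero lam x hlam).comp hsub
  have hb : Tendsto (fun r => F (r - s)) (𝓝[<] t) (𝓝 (F (t - s))) := by
    have h := (hasDerivAt_F lam x hlam (sub_pos.mpr hst)).comp t ((hasDerivAt_id t).sub_const s)
    exact h.continuousAt.tendsto.mono_left nhdsWithin_le_nhds
  have key := intervalIntegral.integral_eq_sub_of_hasDerivAt_of_tendsto hst hderiv hint ha hb
  rw [key, sub_zero, hF]
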